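/- Let (g, J, ω) be a Kähler Lie algebra and let h ⊆ g be an ideal that is ω-isotropic (ω(x,y) = 0 for all x, y ∈ h). Then: (1) h is an abelian ideal; (2) J(h) is an ω-isotropic Lie subalgebra of g; (3) h + J(h) is a Lie subalgebra of g; (4) h ∩ J(h) is an ideal of the Lie algebra h + J(h) that is invariant under J. Moreover, if h is ω-lagrangian (ω-isotropic and every y with ω(h, y) = 0 lies in h), then J(h) is ω-lagrangian. -/

import Mathlib

section KahlerDefs

variable {L : Type*} [LieRing L] [LieAlgebra ℝ L]

def IsComplexStructure (J : Module.End ℝ L) : Prop :=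
  (∀ x, J (J x) = -x) ∧
  ∀ x y : L, ⁅J x, J y⁆ - ⁅x, y⁆ - J ⁅J x, y⁆ - J ⁅x, J y⁆ = 0

def IsSymplecticForm (ω : L →ₗ[ℝ] L →ₗ[ℝ] ℝ) : Prop :=
  (∀ x, ω x x = 0) ∧
  (∀ x, (∀ y, ω x y = 0) → x = 0) ∧
  ∀ x y z : L, ω ⁅x, y⁆ z + ω ⁅y, z⁆ x + ω ⁅z, x⁆ y = 0

def IsKahlerStructure (J : Module.End ℝ L) (ω : L →ₗ[ℝ] L →ₗ[ℝ] ℝ) : Prop :=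
  IsComplexStructure J ∧ IsSymplecticForm ω ∧ ∀ x y : L, ω (J x) (J y) = ω x y

def IsLeviCivita (J : Module.End ℝ L) (ω : L →ₗ[ℝ] L →ₗ[ℝ] ℝ)
    (D : L →ₗ[ℝ] L →ₗ[ℝ] L) : Prop :=
  ∀ x y z : L,
    2 * ω (J (D x y)) z = ω (J ⁅x, y⁆) z - ω (J ⁅y, z⁆) x + ω (J ⁅z, x⁆) y

noncomputable def ricci (D : L →ₗ[ℝ] L →ₗ[ℝ] L) (x y : L) : ℝ :=
  - LinearMap.trace ℝ L
      ((D x) ∘ₗ (D.flip y) - D.flip (D x y) - (D.flip y) ∘ₗ (LieAlgebra.ad ℝ L x))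

def IsFlat (D : L →ₗ[ℝ] L →ₗ[ℝ] L) : Prop :=
  ∀ x y z : L, D x (D y z) - D y (D x z) - D ⁅x, y⁆ z = 0

end KahlerDefs

section Models

variable (M : Type*) [LieRing M] [LieAlgebra ℝ M]

def IsRxH3 : Prop :=
  ∃ b : Module.Basis (Fin 4) ℝ M,
    ⁅b 0, b 1⁆ = b 2 ∧ ⁅b 0, b 2⁆ = 0 ∧ ⁅b 0, b 3⁆ = 0 ∧
    ⁅b 1, b 2⁆ = 0 ∧ ⁅b 1, b 3⁆ = 0 ∧ ⁅b 2, b 3⁆ = 0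

def IsR2xAffR : Prop :=
  ∃ b : Module.Basis (Fin 4) ℝ M,
    ⁅b 0, b 1⁆ = b 1 ∧ ⁅b 0, b 2⁆ = 0 ∧ ⁅b 0, b 3⁆ = 0 ∧
    ⁅b 1, b 2⁆ = 0 ∧ ⁅b 1, b 3⁆ = 0 ∧ ⁅b 2, b 3⁆ = 0

def IsRxE2 : Prop :=
  ∃ b : Module.Basis (Fin 4) ℝ M,
    ⁅b 0, b 1⁆ = -b 2 ∧ ⁅b 0, b 2⁆ = b 1 ∧ ⁅b 0, b 3⁆ = 0 ∧
    ⁅b 1, b 2⁆ = 0 ∧ ⁅b 1, b 3⁆ = 0 ∧ ⁅b 2, b 3⁆ = 0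

def IsAffRxAffR : Prop :=
  ∃ b : Module.Basis (Fin 4) ℝ M,
    ⁅b 0, b 1⁆ = b 1 ∧ ⁅b 0, b 2⁆ = 0 ∧ ⁅b 0, b 3⁆ = 0 ∧
    ⁅b 1, b 2⁆ = 0 ∧ ⁅b 1, b 3⁆ = 0 ∧ ⁅b 2, b 3⁆ = b 3

def IsAffC : Prop :=
  ∃ b : Module.Basis (Fin 4) ℝ M,
    ⁅b 0, b 1⁆ = 0 ∧ ⁅b 0, b 2⁆ = b 2 ∧ ⁅b 0, b 3⁆ = b 3 ∧
    ⁅b 1, b 2⁆ = b 3 ∧ ⁅b 1, b 3⁆ = -b 2 ∧ ⁅b 2, b 3⁆ = 0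

def IsR4m1m1 : Prop :=
  ∃ b : Module.Basis (Fin 4) ℝ M,
    ⁅b 3, b 0⁆ = b 0 ∧ ⁅b 3, b 1⁆ = -b 1 ∧ ⁅b 3, b 2⁆ = -b 2 ∧
    ⁅b 0, b 1⁆ = 0 ∧ ⁅b 0, b 2⁆ = 0 ∧ ⁅b 1, b 2⁆ = 0

def IsR4'0 (δ : ℝ) : Prop :=
  ∃ b : Module.Basis (Fin 4) ℝ M,
    ⁅b 3, b 0⁆ = b 0 ∧ ⁅b 3, b 1⁆ = -(δ • b 2) ∧ ⁅b 3, b 2⁆ = δ • b 1 ∧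
    ⁅b 0, b 1⁆ = 0 ∧ ⁅b 0, b 2⁆ = 0 ∧ ⁅b 1, b 2⁆ = 0

def IsD4 (lam : ℝ) : Prop :=
  ∃ b : Module.Basis (Fin 4) ℝ M,
    ⁅b 0, b 1⁆ = b 2 ∧ ⁅b 3, b 0⁆ = lam • b 0 ∧ ⁅b 3, b 1⁆ = (1 - lam) • b 1 ∧
    ⁅b 3, b 2⁆ = b 2 ∧ ⁅b 0, b 2⁆ = 0 ∧ ⁅b 1, b 2⁆ = 0

def IsD4' (δ : ℝ) : Prop :=
  ∃ b : Module.Basis (Fin 4) ℝ M,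
    ⁅b 0, b 1⁆ = b 2 ∧ ⁅b 3, b 0⁆ = (δ / 2) • b 0 - b 1 ∧
    ⁅b 3, b 1⁆ = b 0 + (δ / 2) • b 1 ∧ ⁅b 3, b 2⁆ = δ • b 2 ∧
    ⁅b 0, b 2⁆ = 0 ∧ ⁅b 1, b 2⁆ = 0

end Models

/-- In a Kähler Lie algebra, an ω-isotropic ideal h is abelian, J(h) is an
ω-isotropic subalgebra, h + J(h) is a subalgebra, h ⊓ J(h) is a J-invariant ideal of
h + J(h), and if h is ω-lagrangian then J(h) is ω-lagrangian. -/
theorem isotropic_ideal_structure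
    {L : Type*} [LieRing L] [LieAlgebra ℝ L] [Module.Finite ℝ L]
    (J : Module.End ℝ L) (ω : L →ₗ[ℝ] L →ₗ[ℝ] ℝ)
    (hK : IsKahlerStructure J ω)
    (h : Submodule ℝ L) (hideal : ∀ x : L, ∀ y ∈ h, ⁅x, y⁆ ∈ h)
    (hiso : ∀ x ∈ h, ∀ y ∈ h, ω x y = 0) :
    (∀ x ∈ h, ∀ y ∈ h, ⁅x, y⁆ = (0 : L)) ∧
    (∀ x ∈ Submodule.map J h, ∀ y ∈ Submodule.map J h,
        ω x y = 0 ∧ ⁅x, y⁆ ∈ Submodule.map J h) ∧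
    (∀ x ∈ h ⊔ Submodule.map J h, ∀ y ∈ h ⊔ Submodule.map J h,
        ⁅x, y⁆ ∈ h ⊔ Submodule.map J h) ∧
    (∀ x ∈ h ⊔ Submodule.map J h, ∀ y ∈ h ⊓ Submodule.map J h,
        ⁅x, y⁆ ∈ h ⊓ Submodule.map J h) ∧
    (∀ y ∈ h ⊓ Submodule.map J h, J y ∈ h ⊓ Submodule.map J h) ∧
    ((∀ y : L, (∀ x ∈ h, ω x y = 0) → y ∈ h) →
      ∀ y : L, (∀ x ∈ Submodule.map J h, ω x y = 0) → y ∈ Submodule.map J h) := by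
  obtain ⟨⟨hJ2, hNij⟩, ⟨halt, hnondeg, hclosed⟩, hcomp⟩ := hK
  -- abelian
  have hab : ∀ x ∈ h, ∀ y ∈ h, ⁅x, y⁆ = (0 : L) := by
    intro x hx y hy
    apply hnondeg
    intro z
    have hc := hclosed x y z
    have hyz : ⁅y, z⁆ ∈ h := by
      rw [← lie_skew]; exact h.neg_mem (hideal z y hy)
    have h1 : ω ⁅y, z⁆ x = 0 := hiso _ hyz _ hx
    have h2 : ω ⁅z, x⁆ y = 0 := hiso _ (hideal z x hx) _ hy
    linarith
  -- bracket of J-images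
  have hbrJ : ∀ a ∈ h, ∀ b ∈ h, ⁅J a, J b⁆ = J (⁅J a, b⁆ + ⁅a, J b⁆) := by
    intro a ha b hb
    have e := hNij a b
    rw [hab a ha b hb, sub_zero, sub_sub, sub_eq_zero] at e
    rw [map_add]; exact e
  have hJmem : ∀ a ∈ h, ∀ b ∈ h, ⁅J a, J b⁆ ∈ Submodule.map J h := by
    intro a ha b hb
    exact ⟨⁅J a, b⁆ + ⁅a, J b⁆,
      h.add_mem (hideal _ _ hb) (by rw [← lie_skew]; exact h.neg_mem (hideal _ _ ha)),
      (hbrJ a ha b hb).symm⟩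
  refine ⟨hab, ?_, ?_, ?_, ?_, ?_⟩
  · -- J(h) isotropic subalgebra
    rintro x ⟨a, ha, rfl⟩ y ⟨b, hb, rfl⟩
    exact ⟨by rw [hcomp]; exact hiso a ha b hb, hJmem a ha b hb⟩
  · -- h + J(h) subalgebra
    intro x hx y hy
    obtain ⟨a, ha, c, hc, rfl⟩ := Submodule.mem_sup.mp hx
    obtain ⟨b, hb, rfl⟩ := hc
    obtain ⟨a', ha', c', hc', rfl⟩ := Submodule.mem_sup.mp hy
    obtain ⟨b', hb', rfl⟩ := hc'
    rw [add_lie, lie_add, lie_add]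
    refine add_mem (add_mem ?_ ?_) (add_mem ?_ ?_)
    · exact Submodule.mem_sup_left (hideal _ _ ha')
    · exact Submodule.mem_sup_left (by rw [← lie_skew]; exact h.neg_mem (hideal _ _ ha))
    · exact Submodule.mem_sup_left (hideal _ _ ha')
    · exact Submodule.mem_sup_right (hJmem b hb b' hb')
  · -- h ⊓ J(h) ideal
    intro x hx y hy
    obtain ⟨hy1, hy2⟩ := Submodule.mem_inf.mp hy
    obtain ⟨w, hw, hwy⟩ := hy2
    obtain ⟨a, ha, c, hc, rfl⟩ := Submodule.mem_sup.mp hx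
    obtain ⟨b, hb, rfl⟩ := hc
    refine Submodule.mem_inf.mpr ⟨hideal _ _ hy1, ?_⟩
    have : ⁅a + J b, y⁆ = ⁅J b, J w⁆ := by
      rw [add_lie, hab a ha y hy1, zero_add, hwy]
    rw [this]
    exact hJmem b hb w hw
  · -- J-invariance of h ⊓ J(h)
    intro y hy
    obtain ⟨hy1, hy2⟩ := Submodule.mem_inf.mp hy
    obtain ⟨w, hw, hwy⟩ := hy2
    refine Submodule.mem_inf.mpr ⟨?_, ⟨y, hy1, rfl⟩⟩
    have : J y = -w := by rw [← hwy, hJ2]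
    rw [this]; exact h.neg_mem hw
  · -- lagrangian
    intro hlag y hy
    have hJy : J y ∈ h := by
      apply hlag
      intro x hx
      have h1 : ω (J x) y = 0 := hy _ ⟨x, hx, rfl⟩
      have h2 : ω (J x) (J (J y)) = ω x (J y) := hcomp x (J y)
      rw [hJ2, map_neg] at h2
      have : -(ω (J x) y) = ω x (J y) := by simpa using h2
      linarith [this]
    refine ⟨-(J y), h.neg_mem hJy, ?_⟩
    rw [map_neg, hJ2, neg_neg]
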